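/- Let A be a unital Banach algebra over ℂ, let X_1, …, X_n ∈ A and let s ∈ ℝ. Then the function G : ℝ → A, G(θ) = ∏_{j=1}^{n} exp(s·θ • X_j), is four times differentiable, and for every θ, the fourth derivative of G at θ equals s⁴ • Σ_{(m_1,…,m_n) ∈ ℕⁿ, m_1+⋯+m_n = 4} (4! / (m_1! ⋯ m_n!)) ∏_{j=1}^{n} ( X_j^{m_j} · exp(s·θ • X_j) ), where the outer product is taken in the order j = 1, …, n. -/

import Mathlib

open NormedSpace

section Aux

variable {A : Type*} [NormedRing A] [NormedAlgebra ℝ A] [CompleteSpace A]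

private lemma aux_hasDerivAt_ofFn_prod : ∀ {n : ℕ} (F : Fin n → ℝ → A) (D : Fin n → A) {θ : ℝ},
    (∀ j, HasDerivAt (F j) (D j) θ) →
    HasDerivAt (fun θ => (List.ofFn fun j => F j θ).prod)
      (∑ i, (List.ofFn fun j => if j = i then D j else F j θ).prod) θ := by
  intro n
  induction n with
  | zero => intro F D θ h; simpa using hasDerivAt_const θ (1 : A)
  | succ n ih =>
    intro F D θ h
    have htail := ih (fun j => F j.succ) (fun j => D j.succ) (fun j => h j.succ)
    have hmul := (h 0).mul htail
    have hfun : (fun θ => F 0 θ * (List.ofFn fun j : Fin n => F j.succ θ).prod)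
        = fun θ => (List.ofFn fun j : Fin (n+1) => F j θ).prod := by
      funext θ; simp [List.ofFn_succ]
    simp only [Pi.mul_def, hfun] at hmul
    convert hmul using 1
    rw [Fin.sum_univ_succ]
    congr 1
    · simp [List.ofFn_succ, Fin.succ_ne_zero]
    · rw [Finset.mul_sum]
      refine Finset.sum_congr rfl fun i _ => ?_
      simp [List.ofFn_succ, Fin.succ_inj, (Fin.succ_ne_zero i).symm]

private lemma aux_ofFn_prod_smul : ∀ {n : ℕ} (i : Fin n) (c : ℝ) (a b : Fin n → A),
    (List.ofFn fun j => if j = i then c • b j else a j).prod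
      = c • (List.ofFn fun j => if j = i then b j else a j).prod := by
  intro n
  induction n with
  | zero => exact fun i => i.elim0
  | succ n ih =>
    intro i c a b
    induction i using Fin.cases with
    | zero => simp [List.ofFn_succ, Fin.succ_ne_zero, smul_mul_assoc]
    | succ i' =>
      simp only [List.ofFn_succ, List.prod_cons, (Fin.succ_ne_zero i').symm,
        Fin.succ_inj, if_neg]
      rw [ih i' c (fun j => a j.succ) (fun j => b j.succ), mul_smul_comm]
      simp

private lemma aux_contDiff_ofFn_prod : ∀ {n : ℕ} (F : Fin n → ℝ → A),
    (∀ j, ContDiff ℝ 4 (F j)) → ContDiff ℝ 4 (fun θ => (List.ofFn fun j => F j θ).prod) := by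
  intro n
  induction n with
  | zero => intro F h; simpa using contDiff_const
  | succ n ih =>
    intro F h
    have := (h 0).mul (ih (fun j => F j.succ) (fun j => h j.succ))
    simpa [List.ofFn_succ] using this

/-- The basic product `P m θ = ∏_j X_j^{m_j} exp((s θ) • X_j)`. -/
private noncomputable def auxP {n : ℕ} (X : Fin n → A) (s : ℝ) (m : Fin n → ℕ) (θ : ℝ) : A :=
  (List.ofFn fun j => X j ^ m j * exp ((s * θ) • X j)).prod

private lemma aux_hasDerivAt_P {n : ℕ} (X : Fin n → A) (s : ℝ) (m : Fin n → ℕ) (θ : ℝ) :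
    HasDerivAt (fun θ => auxP X s m θ)
      (s • ∑ i, auxP X s (Function.update m i (m i + 1)) θ) θ := by
  have hf : ∀ j, HasDerivAt (fun θ : ℝ => X j ^ m j * exp ((s * θ) • X j))
      (s • (X j ^ (m j + 1) * exp ((s * θ) • X j))) θ := by
    intro j
    have h1 : HasDerivAt (fun u : ℝ => exp (u • X j)) (X j * exp ((s * θ) • X j)) (s * θ) :=
      hasDerivAt_exp_smul_const' (X j) (s * θ)
    have h2 : HasDerivAt (fun θ : ℝ => s * θ) s θ := by
      simpa using (hasDerivAt_id θ).const_mul s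
    have h4 := (h1.scomp θ h2).const_mul (X j ^ m j)
    convert h4 using 1
    · rfl
    rw [mul_smul_comm, ← mul_assoc, ← pow_succ]
  have h := aux_hasDerivAt_ofFn_prod (fun j θ => X j ^ m j * exp ((s * θ) • X j))
    (fun j => s • (X j ^ (m j + 1) * exp ((s * θ) • X j))) hf
  convert h using 1
  · rfl
  rw [Finset.smul_sum]
  refine Finset.sum_congr rfl fun i _ => ?_
  rw [aux_ofFn_prod_smul i s (fun j => X j ^ m j * exp ((s * θ) • X j))
    (fun j => X j ^ (m j + 1) * exp ((s * θ) • X j))]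
  simp only [auxP]
  have hfn : (fun j => X j ^ Function.update m i (m i + 1) j * exp ((s * θ) • X j))
      = fun j => if j = i then X j ^ (m j + 1) * exp ((s * θ) • X j)
          else X j ^ m j * exp ((s * θ) • X j) := by
    funext j
    rw [Function.update_apply]
    rcases eq_or_ne j i with rfl | hji
    · simp
    · simp [hji]
  rw [hfn]

private lemma aux_mem_S {n k : ℕ} {m : Fin n → ℕ} :
    m ∈ (Fintype.piFinset fun _ : Fin n => Finset.range (k+1)).filter
        (fun m : Fin n → ℕ => ∑ j : Fin n, m j = k)
      ↔ ∑ j : Fin n, m j = k := by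
  simp only [Finset.mem_filter, Fintype.mem_piFinset, Finset.mem_range]
  refine ⟨fun h => h.2, fun h => ⟨fun j => ?_, h⟩⟩
  have := Finset.single_le_sum (f := m) (fun i _ => Nat.zero_le _) (Finset.mem_univ j)
  omega

private lemma aux_mult_rec {n : ℕ} (m : Fin n → ℕ) (hm : ∑ j, m j ≠ 0) :
    ∑ i ∈ Finset.univ.filter (fun i => m i ≠ 0),
        Nat.multinomial Finset.univ (Function.update m i (m i - 1))
      = Nat.multinomial Finset.univ m := by
  have hPr : 0 < ∏ j, (m j).factorial := Finset.prod_pos fun j _ => Nat.factorial_pos _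
  refine Nat.eq_of_mul_eq_mul_left hPr ?_
  conv_rhs => rw [Nat.multinomial_spec]
  rw [Finset.mul_sum]
  have hterm : ∀ i ∈ Finset.univ.filter (fun i => m i ≠ 0),
      (∏ j, (m j).factorial) * Nat.multinomial Finset.univ (Function.update m i (m i - 1))
        = m i * ((∑ j, m j) - 1).factorial := by
    intro i hi
    rw [Finset.mem_filter] at hi
    have hmi := hi.2
    have e1 : (∑ j, Function.update m i (m i - 1) j) = (∑ j, m j) - 1 := by
      rw [Finset.sum_update_of_mem (Finset.mem_univ i)]
      have h2 : m i + ∑ j ∈ Finset.univ.erase i, m j = ∑ j, m j :=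
        Finset.add_sum_erase _ m (Finset.mem_univ i)
      rw [Finset.sdiff_singleton_eq_erase]
      omega
    have e0 : (fun j => (Function.update m i (m i - 1) j).factorial)
        = Function.update (fun j => (m j).factorial) i ((m i - 1).factorial) := by
      funext j
      rcases eq_or_ne j i with rfl | hji
      · simp
      · simp [Function.update_apply, hji]
    have e2 : (∏ j, (m j).factorial)
        = m i * ∏ j, (Function.update m i (m i - 1) j).factorial := by
      rw [e0, Finset.prod_update_of_mem (Finset.mem_univ i), Finset.sdiff_singleton_eq_erase,
        ← Finset.mul_prod_erase _ (fun j => (m j).factorial) (Finset.mem_univ i)]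
      obtain ⟨p, hp⟩ : ∃ p, m i = p + 1 := ⟨m i - 1, by omega⟩
      rw [hp]
      simp [Nat.factorial_succ, mul_assoc]
    rw [e2, mul_assoc, Nat.multinomial_spec, e1]
  rw [Finset.sum_congr rfl hterm, ← Finset.sum_mul, Finset.sum_filter_ne_zero,
    Nat.mul_factorial_pred hm]

private lemma aux_sum_shift {M : Type*} [AddCommMonoid M] {n k : ℕ} (i : Fin n)
    (g : (Fin n → ℕ) → M) :
    ∑ m ∈ (Fintype.piFinset fun _ : Fin n => Finset.range (k+1)).filter
        (fun m : Fin n → ℕ => ∑ j : Fin n, m j = k), g m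
      = ∑ m' ∈ ((Fintype.piFinset fun _ : Fin n => Finset.range (k+1+1)).filter
            (fun m : Fin n → ℕ => ∑ j : Fin n, m j = k+1)).filter (fun m' => m' i ≠ 0),
          g (Function.update m' i (m' i - 1)) := by
  have hsum : ∀ (m : Fin n → ℕ) (b : ℕ),
      ∑ j, Function.update m i b j = b + ∑ j ∈ Finset.univ.erase i, m j := by
    intro m b
    rw [Finset.sum_update_of_mem (Finset.mem_univ i), Finset.sdiff_singleton_eq_erase]
  have hrest : ∀ m : Fin n → ℕ, m i + ∑ j ∈ Finset.univ.erase i, m j = ∑ j, m j :=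
    fun m => Finset.add_sum_erase _ m (Finset.mem_univ i)
  refine Finset.sum_bij' (fun m _ => Function.update m i (m i + 1))
    (fun m' _ => Function.update m' i (m' i - 1)) ?_ ?_ ?_ ?_ ?_
  · intro m hm
    have h1 : ∑ j, m j = k := aux_mem_S.mp hm
    have h2 : ∑ j, Function.update m i (m i + 1) j = k + 1 := by
      have := hsum m (m i + 1); have := hrest m; omega
    rw [Finset.mem_filter]
    exact ⟨aux_mem_S.mpr h2, by simp⟩
  · intro m' hm'
    rw [Finset.mem_filter] at hm'
    have h1 : ∑ j, m' j = k + 1 := aux_mem_S.mp hm'.1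
    have h2 : ∑ j, Function.update m' i (m' i - 1) j = k := by
      have := hsum m' (m' i - 1); have := hrest m'; have := hm'.2; omega
    exact aux_mem_S.mpr h2
  · intro m hm
    simp [Function.update_idem]
  · intro m' hm'
    rw [Finset.mem_filter] at hm'
    have := hm'.2
    simp only [Function.update_idem, Function.update_self]
    rw [show m' i - 1 + 1 = m' i by omega, Function.update_eq_self]
  · intro m hm
    simp [Function.update_idem]

private lemma aux_key {n : ℕ} (X : Fin n → A) (s : ℝ) (k : ℕ) (θ : ℝ) :
    iteratedDeriv k (fun θ : ℝ => (List.ofFn fun j => exp ((s * θ) • X j)).prod) θ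
      = s ^ k • ∑ m ∈ (Fintype.piFinset fun _ : Fin n => Finset.range (k+1)).filter
            (fun m : Fin n → ℕ => ∑ j : Fin n, m j = k),
          (Nat.multinomial Finset.univ m : ℝ) • auxP X s m θ := by
  induction k generalizing θ with
  | zero =>
    have hS : (Fintype.piFinset fun _ : Fin n => Finset.range (0+1)).filter
        (fun m : Fin n → ℕ => ∑ j : Fin n, m j = 0) = {fun _ : Fin n => (0:ℕ)} := by
      ext m
      rw [Finset.mem_singleton, aux_mem_S, Finset.sum_eq_zero_iff]
      constructor
      · intro h; funext j; exact h j (Finset.mem_univ j)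
      · rintro rfl; simp
    rw [iteratedDeriv_zero, hS, Finset.sum_singleton]
    have hmult : Nat.multinomial (Finset.univ : Finset (Fin n)) (fun _ => 0) = 1 := by
      have := Nat.multinomial_spec (Finset.univ : Finset (Fin n)) (fun _ => 0)
      simpa using this
    rw [hmult]
    simp [auxP]
  | succ k ih =>
    rw [iteratedDeriv_succ]
    have hfun : iteratedDeriv k
        (fun θ : ℝ => (List.ofFn fun j => exp ((s * θ) • X j)).prod)
        = fun θ => s ^ k • ∑ m ∈ (Fintype.piFinset fun _ : Fin n => Finset.range (k+1)).filter
              (fun m : Fin n → ℕ => ∑ j : Fin n, m j = k),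
            (Nat.multinomial Finset.univ m : ℝ) • auxP X s m θ := funext ih
    rw [hfun]
    have H : HasDerivAt
        (fun θ => s ^ k • ∑ m ∈ (Fintype.piFinset fun _ : Fin n => Finset.range (k+1)).filter
              (fun m : Fin n → ℕ => ∑ j : Fin n, m j = k),
            (Nat.multinomial Finset.univ m : ℝ) • auxP X s m θ)
        (s ^ k • ∑ m ∈ (Fintype.piFinset fun _ : Fin n => Finset.range (k+1)).filter
              (fun m : Fin n → ℕ => ∑ j : Fin n, m j = k),
            (Nat.multinomial Finset.univ m : ℝ) •
              (s • ∑ i, auxP X s (Function.update m i (m i + 1)) θ)) θ :=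
      (HasDerivAt.fun_sum fun m _ =>
        (aux_hasDerivAt_P X s m θ).const_smul ((Nat.multinomial Finset.univ m : ℝ))).const_smul
        (s ^ k)
    rw [H.deriv]
    have step1 :
        (∑ m ∈ (Fintype.piFinset fun _ : Fin n => Finset.range (k+1)).filter
              (fun m : Fin n → ℕ => ∑ j : Fin n, m j = k),
            (Nat.multinomial Finset.univ m : ℝ) •
              (s • ∑ i, auxP X s (Function.update m i (m i + 1)) θ))
          = s • ∑ m ∈ (Fintype.piFinset fun _ : Fin n => Finset.range (k+1)).filter
              (fun m : Fin n → ℕ => ∑ j : Fin n, m j = k),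
            ∑ i, (Nat.multinomial Finset.univ m : ℝ) •
              auxP X s (Function.update m i (m i + 1)) θ := by
      rw [Finset.smul_sum]
      refine Finset.sum_congr rfl fun m _ => ?_
      rw [smul_comm, Finset.smul_sum]
    rw [step1, smul_smul, ← pow_succ]
    congr 1
    rw [Finset.sum_comm]
    have step2 : ∀ i : Fin n,
        (∑ m ∈ (Fintype.piFinset fun _ : Fin n => Finset.range (k+1)).filter
            (fun m : Fin n → ℕ => ∑ j : Fin n, m j = k),
          (Nat.multinomial Finset.univ m : ℝ) • auxP X s (Function.update m i (m i + 1)) θ)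
        = ∑ m' ∈ ((Fintype.piFinset fun _ : Fin n => Finset.range (k+1+1)).filter
              (fun m : Fin n → ℕ => ∑ j : Fin n, m j = k+1)).filter (fun m' => m' i ≠ 0),
            (Nat.multinomial Finset.univ (Function.update m' i (m' i - 1)) : ℝ) •
              auxP X s m' θ := by
      intro i
      rw [aux_sum_shift i (fun m => (Nat.multinomial Finset.univ m : ℝ) •
        auxP X s (Function.update m i (m i + 1)) θ)]
      refine Finset.sum_congr rfl fun m' hm' => ?_
      rw [Finset.mem_filter] at hm'
      have h0 := hm'.2
      congr 1
      rw [Function.update_idem, Function.update_self,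
        show m' i - 1 + 1 = m' i by omega, Function.update_eq_self]
    rw [Finset.sum_congr rfl fun i _ => step2 i]
    rw [Finset.sum_comm' (s := Finset.univ)
      (t := fun i => ((Fintype.piFinset fun _ : Fin n => Finset.range (k+1+1)).filter
          (fun m : Fin n → ℕ => ∑ j : Fin n, m j = k+1)).filter (fun m' => m' i ≠ 0))
      (t' := (Fintype.piFinset fun _ : Fin n => Finset.range (k+1+1)).filter
          (fun m : Fin n → ℕ => ∑ j : Fin n, m j = k+1))
      (s' := fun m' => Finset.univ.filter (fun i => m' i ≠ 0))
      (by intro i m'; simp only [Finset.mem_filter, Finset.mem_univ, true_and]; tauto)]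
    refine Finset.sum_congr rfl fun m' hm' => ?_
    have hsum : ∑ j, m' j = k + 1 := aux_mem_S.mp hm'
    rw [← Finset.sum_smul]
    congr 1
    rw [← Nat.cast_sum]
    rw [aux_mult_rec m' (by omega)]

private lemma aux_contDiff {n : ℕ} (X : Fin n → A) (s : ℝ) :
    ContDiff ℝ 4 (fun θ : ℝ => (List.ofFn fun j => exp ((s * θ) • X j)).prod) := by
  refine aux_contDiff_ofFn_prod _ fun j => ?_
  have hexp : ContDiff ℝ 4 (exp : A → A) := by
    rw [contDiff_iff_contDiffAt]
    intro x
    exact (analyticAt_exp_of_mem_ball (𝕂 := ℝ) x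
      ((expSeries_radius_eq_top ℝ A).symm ▸ edist_lt_top _ _)).contDiffAt
  have hlin : ContDiff ℝ 4 fun θ : ℝ => (s * θ) • X j :=
    (contDiff_const.mul contDiff_id).smul contDiff_const
  exact hexp.comp hlin

end Aux

/-- The general-Leibniz-rule formula (equation 46 of Appendix A) for the fourth
derivative of the Trotter product `G(θ) = ∏_{j=1}^{n} exp(s·θ • X_j)`:
`G` is four times differentiable and
`G⁗(θ) = s⁴ • Σ_{m : Σ_j m_j = 4} (4!/(m₁!⋯m_n!)) ∏_j (X_j^{m_j} exp(s·θ • X_j))`. -/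
theorem stmt_17 {A : Type*} [NormedRing A] [NormedAlgebra ℂ A]
    [CompleteSpace A] [NormOneClass A] (n : ℕ) (X : Fin n → A) (s : ℝ) :
    ContDiff ℝ 4 (fun θ : ℝ => (List.ofFn fun j => exp ((s * θ) • X j)).prod)
      ∧ ∀ θ : ℝ,
        iteratedDeriv 4 (fun θ : ℝ => (List.ofFn fun j => exp ((s * θ) • X j)).prod) θ
          = s ^ 4 • ∑ m ∈ (Fintype.piFinset fun _ : Fin n => Finset.range 5).filter
                (fun m : Fin n → ℕ => ∑ j : Fin n, m j = 4),
              (Nat.multinomial Finset.univ m : ℝ) •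
                (List.ofFn fun j => X j ^ m j * exp ((s * θ) • X j)).prod := by
  constructor
  · exact aux_contDiff X s
  · intro θ
    rw [aux_key X s 4 θ]
    rfl
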